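/- arXiv:1901.01177 — 3 statements merged into one kernel-verified Lean document; each statement's English description precedes it below -/
import Mathlib

section
/- For φ(ξ) = |ξ|^a with 1 < a < 2 on ℝ, if |ξ₁| ∼ K and |ξ₂| ∼ N with K ≤ N/4 and N ≥ 1, then |φ'(ξ₂) ± φ'(ξ₁)| ≥ c·N^{a−1} for a constant c > 0 depending only on a. That is, φ satisfies the transversality condition (T_{a−1}). -/
open Real

lemma abs_phi' (a : ℝ) (ha : 0 < a) (ξ : ℝ) (hξ : ξ ≠ 0) :
    |a * Real.sign ξ * |ξ| ^ (a - 1)| = a * |ξ| ^ (a - 1) := by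
  have hs : |Real.sign ξ| = 1 := by
    rcases lt_or_gt_of_ne hξ with h | h
    · rw [Real.sign_of_neg h]; norm_num
    · rw [Real.sign_of_pos h]; norm_num
  rw [abs_mul, abs_mul, hs, abs_of_pos ha,
    abs_of_nonneg (Real.rpow_nonneg (abs_nonneg ξ) _), mul_one]

/-- For `φ(ξ) = |ξ|^a` on `ℝ` with `1 < a < 2`, whose derivative is
`φ'(ξ) = a · sgn(ξ) · |ξ|^{a-1}`, there is `c > 0` depending only on `a` such that whenever
`K ≤ |ξ₁| < 2K`, `N ≤ |ξ₂| < 2N`, `K ≤ N/4` and `N ≥ 1`, one has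
`|φ'(ξ₂) ± φ'(ξ₁)| ≥ c·N^{a-1}` (transversality condition `(T_{a-1})`). -/
theorem transversality_fractional (a : ℝ) (ha1 : 1 < a) (ha2 : a < 2)
    (φ' : ℝ → ℝ) (hφ' : φ' = fun ξ => a * Real.sign ξ * |ξ| ^ (a - 1)) :
    ∃ c > 0, ∀ K N ξ₁ ξ₂ : ℝ, 0 < K → 1 ≤ N → K ≤ N / 4 →
      K ≤ |ξ₁| → |ξ₁| < 2 * K → N ≤ |ξ₂| → |ξ₂| < 2 * N →
      c * N ^ (a - 1) ≤ |φ' ξ₂ + φ' ξ₁| ∧ c * N ^ (a - 1) ≤ |φ' ξ₂ - φ' ξ₁| := by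
  have ha : (0:ℝ) < a := by linarith
  have h2 : (2:ℝ) ^ (1 - a) < 1 :=
    Real.rpow_lt_one_of_one_lt_of_neg one_lt_two (by linarith)
  refine ⟨a * (1 - (2:ℝ) ^ (1 - a)), mul_pos ha (by linarith), ?_⟩
  intro K N ξ₁ ξ₂ hK hN hKN h1l h1u h2l h2u
  have hξ₁ : ξ₁ ≠ 0 := by
    intro h; rw [h, abs_zero] at h1l; linarith
  have hξ₂ : ξ₂ ≠ 0 := by
    intro h; rw [h, abs_zero] at h2l; linarith
  subst hφ'
  simp only
  have hN0 : (0:ℝ) < N := by linarith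
  -- lower bound for |φ' ξ₂|
  have hlow : a * N ^ (a - 1) ≤ a * |ξ₂| ^ (a - 1) := by
    have := Real.rpow_le_rpow (le_of_lt hN0) h2l (by linarith : (0:ℝ) ≤ a - 1)
    nlinarith
  -- upper bound for |φ' ξ₁|
  have hup : a * |ξ₁| ^ (a - 1) ≤ a * ((2:ℝ) ^ (1 - a) * N ^ (a - 1)) := by
    have h12 : |ξ₁| ≤ N / 2 := by linarith
    have h1 : |ξ₁| ^ (a - 1) ≤ (N / 2) ^ (a - 1) :=
      Real.rpow_le_rpow (abs_nonneg _) h12 (by linarith)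
    have h2' : (N / 2) ^ (a - 1) = (2:ℝ) ^ (1 - a) * N ^ (a - 1) := by
      have hinv : (2:ℝ) ^ (1 - a) = ((2:ℝ) ^ (a - 1))⁻¹ := by
        rw [show (1 - a) = -(a - 1) by ring, Real.rpow_neg (by norm_num)]
      rw [Real.div_rpow (le_of_lt hN0) (by norm_num), hinv]
      ring
    nlinarith [h1, h2'.le, h2'.ge]
  have key : a * (1 - (2:ℝ) ^ (1 - a)) * N ^ (a - 1)
      ≤ a * |ξ₂| ^ (a - 1) - a * |ξ₁| ^ (a - 1) := by nlinarith
  have e1 := abs_phi' a ha ξ₁ hξ₁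
  have e2 := abs_phi' a ha ξ₂ hξ₂
  set x := a * Real.sign ξ₂ * |ξ₂| ^ (a - 1)
  set y := a * Real.sign ξ₁ * |ξ₁| ^ (a - 1)
  have hadd : |x| - |y| ≤ |x + y| := by
    have := abs_add_le (x + y) (-y); simp at this; linarith [this]
  have hsub : |x| - |y| ≤ |x - y| := by
    have := abs_sub_abs_le_abs_sub x y; linarith
  constructor <;> [skip; skip] <;> rw [e1, e2] at * <;> linarith
end

section
/- Let φ ∈ C²(ℝⁿ, ℝ). Then for any T > 0 and any finitely supported coefficients c : ℤⁿ → ℂ and p ≥ 1, ∫_0^T ∫_{[0,2π]ⁿ} |Σ_ξ c_ξ e^{i(x·(ξ₀+ξ) + tφ(ξ₀+ξ))}|^p dx dt = ∫_0^T ∫_{[0,2π]ⁿ} |Σ_ξ c_ξ e^{i(x·ξ + tψ_{ξ₀}(ξ))}|^p dx dt, where ψ_{ξ₀}(ξ) = φ(ξ₀+ξ) − φ(ξ₀) − ∇φ(ξ₀)·ξ. -/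
open Real MeasureTheory

section aux
open Set
variable {n : ℕ}

lemma box_translate (F : (Fin n → ℝ) → ℝ) (hFm : Measurable F)
    (hper : ∀ (x : Fin n → ℝ) (k : Fin n → ℤ), F (x + fun i => (2*π) * k i) = F x)
    (v : Fin n → ℝ) :
    ∫ x in Set.univ.pi (fun _ : Fin n => Set.Icc (0:ℝ) (2*π)), F (x + v)
      = ∫ x in Set.univ.pi (fun _ : Fin n => Set.Icc (0:ℝ) (2*π)), F x := by
  have hπ : (0:ℝ) < 2*π := by positivity
  haveI : Fact ((0:ℝ) < 2*π) := ⟨hπ⟩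
  rw [volume_pi, ← setIntegral_congr_set Measure.pi_Ioc_ae_eq_pi_Icc,
    ← setIntegral_congr_set Measure.pi_Ioc_ae_eq_pi_Icc]
  set μpi : Measure (Fin n → ℝ) := Measure.pi fun _ => volume.restrict (Ioc 0 (2*π)) with hμpi
  have hbox : (Measure.pi fun _ : Fin n => (volume : Measure ℝ)).restrict
      (Set.univ.pi fun _ => Ioc (0:ℝ) (2*π)) = μpi := by
    refine (Measure.pi_eq fun s hs => ?_).symm
    rw [Measure.restrict_apply (MeasurableSet.univ_pi hs), ← Set.pi_inter_distrib,
      Measure.pi_pi]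
    exact Finset.prod_congr rfl fun i _ => (Measure.restrict_apply (hs i)).symm
  rw [hbox]
  -- now work on `μpi`
  set ν : Measure (Fin n → AddCircle (2*π)) := Measure.pi fun _ => volume with hν
  set Q : (Fin n → ℝ) → (Fin n → AddCircle (2*π)) := fun x i => (x i : AddCircle (2*π))
    with hQdef
  have hQ : MeasurePreserving Q μpi ν := by
    refine measurePreserving_pi _ _ fun i => ?_
    simpa using AddCircle.measurePreserving_mk (T := 2*π) 0
  set G : (Fin n → AddCircle (2*π)) → ℝ :=
    fun z => F (fun i => ((AddCircle.equivIoc (2*π) 0 (z i) : ℝ))) with hGdef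
  have hGm : Measurable G := by
    refine hFm.comp (measurable_pi_lambda _ fun i => ?_)
    exact measurable_subtype_coe.comp
      ((AddCircle.measurableEquivIoc (2*π) 0).measurable.comp (measurable_pi_apply i))
  have hGQ : ∀ x : Fin n → ℝ, G (Q x) = F x := by
    intro x
    have hk : ∀ i : Fin n, ∃ k : ℤ,
        ((AddCircle.equivIoc (2*π) 0 ((x i : AddCircle (2*π))) : ℝ)) = x i + (2*π) * k := by
      intro i
      have h1 : (((AddCircle.equivIoc (2*π) 0 ((x i : AddCircle (2*π)))) : ℝ)
          : AddCircle (2*π)) = (x i : AddCircle (2*π)) := by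
        simpa [AddCircle.equivIoc, QuotientAddGroup.equivIocMod]
          using (AddCircle.equivIoc (2*π) 0).symm_apply_apply ((x i : AddCircle (2*π)))
      rw [eq_comm, QuotientAddGroup.eq] at h1
      obtain ⟨k, hk⟩ := AddSubgroup.mem_zmultiples_iff.mp h1
      refine ⟨k, ?_⟩
      rw [zsmul_eq_mul] at hk
      linarith
    choose k hk using hk
    have : (fun i => ((AddCircle.equivIoc (2*π) 0 ((x i : AddCircle (2*π))) : ℝ)))
        = x + fun i => (2*π) * k i := by
      funext i; simpa using hk i
    simpa [hGdef, hQdef, this] using hper x k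
  have main : ∀ w : Fin n → ℝ,
      ∫ x, F (x + w) ∂μpi = ∫ z, G (Q w + z) ∂ν := by
    intro w
    have h1 : ∀ x : Fin n → ℝ, F (x + w) = G (Q w + Q x) := by
      intro x
      rw [← hGQ (x + w)]
      congr 1
      funext i
      simp [hQdef, AddCircle.coe_add, add_comm]
    calc ∫ x, F (x + w) ∂μpi = ∫ x, G (Q w + Q x) ∂μpi := by simp only [h1]
      _ = ∫ z, G (Q w + z) ∂(Measure.map Q μpi) := by
          rw [integral_map hQ.measurable.aemeasurable]
          exact ((hGm.comp (measurable_const_add _)).aestronglyMeasurable)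
      _ = ∫ z, G (Q w + z) ∂ν := by rw [hQ.map_eq]
  have h0 : Q 0 = 0 := by funext i; simp [hQdef]
  calc ∫ x, F (x + v) ∂μpi = ∫ z, G (Q v + z) ∂ν := main v
    _ = ∫ z, G z ∂ν := integral_add_left_eq_self G (Q v)
    _ = ∫ z, G (Q 0 + z) ∂ν := by rw [h0]; simp
    _ = ∫ x, F (x + 0) ∂μpi := (main 0).symm
    _ = ∫ x, F x ∂μpi := by simp

end aux

/-- Galilean invariance of space-time `L^p` integrals on the torus: for
`φ ∈ C²(ℝⁿ,ℝ)`, finitely supported `c : ℤⁿ → ℂ`, `T > 0`, `p ≥ 1`, the `L^p(I×[0,2π]ⁿ)`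
integral of the exponential sum with frequency-shifted phase `x·(ξ₀+ξ) + tφ(ξ₀+ξ)` equals
the one with recentered phase `x·ξ + tψ_{ξ₀}(ξ)`, where
`ψ_{ξ₀}(ξ) = φ(ξ₀+ξ) − φ(ξ₀) − ∇φ(ξ₀)·ξ`. -/
theorem galilean_Lp_identity (n : ℕ) (φ : (Fin n → ℝ) → ℝ) (hφ : ContDiff ℝ 2 φ)
    (ξ₀ : Fin n → ℝ) (g : Fin n → ℝ) (hg : ∀ i, g i = fderiv ℝ φ ξ₀ (Pi.single i 1))
    (ψ : (Fin n → ℤ) → ℝ)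
    (hψ : ∀ ξ : Fin n → ℤ,
      ψ ξ = φ (ξ₀ + fun i => (ξ i : ℝ)) - φ ξ₀ - ∑ i, g i * (ξ i : ℝ))
    (s : Finset (Fin n → ℤ)) (c : (Fin n → ℤ) → ℂ) (T p : ℝ) (hT : 0 < T) (hp : 1 ≤ p) :
    (∫ t in (0:ℝ)..T, ∫ x in Set.univ.pi (fun _ : Fin n => Set.Icc (0:ℝ) (2*π)),
        ‖∑ ξ ∈ s, c ξ * Complex.exp (Complex.I *
          (((∑ i, x i * (ξ₀ i + (ξ i : ℝ))) + t * φ (ξ₀ + fun i => (ξ i : ℝ)) : ℝ) : ℂ))‖ ^ p)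
      = ∫ t in (0:ℝ)..T, ∫ x in Set.univ.pi (fun _ : Fin n => Set.Icc (0:ℝ) (2*π)),
        ‖∑ ξ ∈ s, c ξ * Complex.exp (Complex.I *
          (((∑ i, x i * (ξ i : ℝ)) + t * ψ ξ : ℝ) : ℂ))‖ ^ p := by
  have key : ∀ t : ℝ,
      (∫ x in Set.univ.pi (fun _ : Fin n => Set.Icc (0:ℝ) (2*π)),
        (‖(∑ ξ ∈ s, c ξ * Complex.exp (Complex.I *
          (((∑ i, x i * (ξ₀ i + (ξ i : ℝ))) + t * φ (ξ₀ + fun i => (ξ i : ℝ)) : ℝ) : ℂ)))‖) ^ p)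
      = ∫ x in Set.univ.pi (fun _ : Fin n => Set.Icc (0:ℝ) (2*π)),
        (‖(∑ ξ ∈ s, c ξ * Complex.exp (Complex.I *
          (((∑ i, x i * (ξ i : ℝ)) + t * ψ ξ : ℝ) : ℂ)))‖) ^ p := by
    intro t
    set Ft : (Fin n → ℝ) → ℝ := fun y =>
      (‖(∑ ξ ∈ s, c ξ * Complex.exp (Complex.I *
        (((∑ i, y i * (ξ i : ℝ)) + t * ψ ξ : ℝ) : ℂ)))‖) ^ p with hFt
    have hcont : Continuous Ft := by
      apply Continuous.rpow_const
      · exact continuous_norm.comp (continuous_finset_sum _ fun ξ _ =>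
          continuous_const.mul (Complex.continuous_exp.comp (continuous_const.mul
            (Complex.continuous_ofReal.comp
              ((continuous_finset_sum _ fun i _ =>
                (continuous_apply i).mul continuous_const).add continuous_const)))))
      · intro x; right; linarith
    have hper : ∀ (x : Fin n → ℝ) (k : Fin n → ℤ),
        Ft (x + fun i => (2*π) * k i) = Ft x := by
      intro x k
      simp only [hFt]
      congr 2
      refine Finset.sum_congr rfl fun ξ _ => ?_
      congr 1
      have hre : (∑ i, (x + fun i => (2*π) * (k i : ℝ)) i * (ξ i : ℝ)) + t * ψ ξ
          = ((∑ i, x i * (ξ i : ℝ)) + t * ψ ξ) + ((∑ i, k i * ξ i : ℤ) : ℝ) * (2*π) := by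
        have h1 : ∑ i, (x + fun i => (2*π) * (k i : ℝ)) i * (ξ i : ℝ)
            = ∑ i, (x i * (ξ i : ℝ) + ((k i : ℝ) * (ξ i : ℝ)) * (2*π)) :=
          Finset.sum_congr rfl fun i _ => by simp only [Pi.add_apply]; ring
        rw [h1, Finset.sum_add_distrib, ← Finset.sum_mul]
        push_cast
        ring
      rw [hre, show ((((∑ i, x i * (ξ i : ℝ)) + t * ψ ξ)
            + ((∑ i, k i * ξ i : ℤ) : ℝ) * (2*π) : ℝ) : ℂ)
          = (((∑ i, x i * (ξ i : ℝ)) + t * ψ ξ : ℝ) : ℂ)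
            + ((∑ i, k i * ξ i : ℤ) : ℂ) * (2*π) by push_cast; ring,
        mul_add, Complex.exp_add,
        show Complex.I * (((∑ i, k i * ξ i : ℤ) : ℂ) * (2*π))
          = ((∑ i, k i * ξ i : ℤ) : ℂ) * (2 * (π:ℂ) * Complex.I) by ring,
        Complex.exp_int_mul_two_pi_mul_I, mul_one]
    have hpoint : ∀ x : Fin n → ℝ,
        (‖(∑ ξ ∈ s, c ξ * Complex.exp (Complex.I *
          (((∑ i, x i * (ξ₀ i + (ξ i : ℝ))) + t * φ (ξ₀ + fun i => (ξ i : ℝ)) : ℝ) : ℂ)))‖) ^ p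
        = Ft (x + fun i => t * g i) := by
      intro x
      have hsum : (∑ ξ ∈ s, c ξ * Complex.exp (Complex.I *
          (((∑ i, x i * (ξ₀ i + (ξ i : ℝ))) + t * φ (ξ₀ + fun i => (ξ i : ℝ)) : ℝ) : ℂ)))
          = Complex.exp (Complex.I * (((∑ i, x i * ξ₀ i) + t * φ ξ₀ : ℝ) : ℂ)) *
            ∑ ξ ∈ s, c ξ * Complex.exp (Complex.I *
              (((∑ i, (x + fun i => t * g i) i * (ξ i : ℝ)) + t * ψ ξ : ℝ) : ℂ)) := by
        rw [Finset.mul_sum]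
        refine Finset.sum_congr rfl fun ξ _ => ?_
        rw [← mul_assoc, mul_comm (Complex.exp _) (c ξ), mul_assoc, ← Complex.exp_add]
        congr 1
        have hre : (∑ i, x i * (ξ₀ i + (ξ i : ℝ))) + t * φ (ξ₀ + fun i => (ξ i : ℝ))
            = ((∑ i, x i * ξ₀ i) + t * φ ξ₀)
              + ((∑ i, (x + fun i => t * g i) i * (ξ i : ℝ)) + t * ψ ξ) := by
          have h1 : (∑ i, x i * (ξ₀ i + (ξ i : ℝ)))
              = (∑ i, x i * ξ₀ i) + ∑ i, x i * (ξ i : ℝ) := by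
            rw [← Finset.sum_add_distrib]
            exact Finset.sum_congr rfl fun i _ => by ring
          have h2 : (∑ i, (x + fun i => t * g i) i * (ξ i : ℝ))
              = (∑ i, x i * (ξ i : ℝ)) + t * ∑ i, g i * (ξ i : ℝ) := by
            rw [Finset.mul_sum, ← Finset.sum_add_distrib]
            exact Finset.sum_congr rfl fun i _ => by simp only [Pi.add_apply]; ring
          rw [hψ ξ, h1, h2]; ring
        rw [hre]
        push_cast
        ring
      rw [hFt]
      simp only [hsum, norm_mul, Complex.norm_exp]
      norm_num
    calc (∫ x in Set.univ.pi (fun _ : Fin n => Set.Icc (0:ℝ) (2*π)),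
        (‖(∑ ξ ∈ s, c ξ * Complex.exp (Complex.I *
          (((∑ i, x i * (ξ₀ i + (ξ i : ℝ))) + t * φ (ξ₀ + fun i => (ξ i : ℝ)) : ℝ) : ℂ)))‖) ^ p)
        = ∫ x in Set.univ.pi (fun _ : Fin n => Set.Icc (0:ℝ) (2*π)),
            Ft (x + fun i => t * g i) := by simp only [hpoint]
      _ = ∫ x in Set.univ.pi (fun _ : Fin n => Set.Icc (0:ℝ) (2*π)), Ft x :=
            box_translate Ft hcont.measurable hper _
  simp only [key]
end

section
/- Let φ_N(x) = N^{-1} Σ_{|k₁|,|k₂| ≤ N} e^{ik₁x₁}e^{−ik₁x₂}e^{ik₂x₃}e^{−ik₂x₄} on 𝕋⁴. Then ‖φ_N‖_{H^s(𝕋⁴)} ∼ N^s for s ≥ 0, and φ_N is invariant under the flow e^{it(∂²_{x₁}−∂²_{x₂}+∂²_{x₃}−∂²_{x₄})}. -/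
open Real

/-- Fourier coefficients of `φ_N(x) = N^{-1} Σ_{|k₁|,|k₂|≤N} e^{ik₁x₁}e^{-ik₁x₂}e^{ik₂x₃}e^{-ik₂x₄}`
on `𝕋⁴`: `φ̂_N(ξ) = N^{-1}` if `ξ = (k₁,-k₁,k₂,-k₂)`, `|k₁|,|k₂| ≤ N`, else `0`. -/
noncomputable def phiN4coef (N : ℕ) (ξ : Fin 4 → ℤ) : ℂ :=
  if ξ 1 = -ξ 0 ∧ ξ 3 = -ξ 2 ∧ |ξ 0| ≤ (N : ℤ) ∧ |ξ 2| ≤ (N : ℤ) then ((N : ℝ)⁻¹ : ℝ) else 0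

/-- Squared `H^s(𝕋⁴)` norm of `φ_N` via Fourier coefficients. -/
noncomputable def HsSq4 (s : ℝ) (N : ℕ) : ℝ :=
  (2 * π) ^ 4 * ∑' ξ : Fin 4 → ℤ, (1 + ∑ i, ((ξ i : ℝ)) ^ 2) ^ s * ‖phiN4coef N ξ‖ ^ 2

private lemma e_inj : Function.Injective (fun k : ℤ × ℤ => (![k.1, -k.1, k.2, -k.2] : Fin 4 → ℤ)) := by
  intro a b h
  have h0 := congrFun h 0
  have h2 := congrFun h 2
  simp at h0 h2
  exact Prod.ext h0 h2

lemma HsSq4_eq (s : ℝ) (N : ℕ) :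
    HsSq4 s N = (2 * π) ^ 4 *
      ∑ k ∈ Finset.Icc (-(N:ℤ)) (N:ℤ) ×ˢ Finset.Icc (-(N:ℤ)) (N:ℤ),
        (1 + 2*(k.1:ℝ)^2 + 2*(k.2:ℝ)^2) ^ s * ((N:ℝ)⁻¹) ^ 2 := by
  unfold HsSq4
  congr 1
  rw [tsum_eq_sum (s := (Finset.Icc (-(N:ℤ)) (N:ℤ) ×ˢ Finset.Icc (-(N:ℤ)) (N:ℤ)).image
      (fun k : ℤ × ℤ => (![k.1, -k.1, k.2, -k.2] : Fin 4 → ℤ)))]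
  · rw [Finset.sum_image (fun a _ b _ h => e_inj h)]
    refine Finset.sum_congr rfl fun k hk => ?_
    simp only [Finset.mem_product, Finset.mem_Icc] at hk
    have hco : phiN4coef N ![k.1, -k.1, k.2, -k.2] = (((N:ℝ)⁻¹ : ℝ) : ℂ) := by
      unfold phiN4coef
      rw [if_pos]
      simp [abs_le]
      omega
    rw [hco, Fin.sum_univ_four]
    simp only [Matrix.cons_val_zero, Matrix.cons_val_one, Matrix.head_cons,
      Matrix.cons_val_two, Matrix.tail_cons, Matrix.cons_val_three, Complex.norm_real,
      Real.norm_eq_abs, abs_inv, Nat.abs_cast]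
    push_cast
    congr 1
    ring
  · intro ξ hξ
    have hz : phiN4coef N ξ = 0 := by
      unfold phiN4coef
      rw [if_neg]
      intro h
      apply hξ
      refine Finset.mem_image.mpr ⟨(ξ 0, ξ 2), ?_, ?_⟩
      · simp only [Finset.mem_product, Finset.mem_Icc]
        constructor <;> [skip; skip] <;> rw [← abs_le] <;> [exact h.2.2.1; exact h.2.2.2]
      · funext i
        fin_cases i <;> simp [h.1, h.2.1]
    simp [hz]

private lemma rpow_twice (n : ℝ) (hn : 0 ≤ n) (s : ℝ) : n ^ (2*s) = (n^2) ^ s := by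
  rw [← Real.rpow_natCast n 2, ← Real.rpow_mul hn]
  norm_num

lemma phiN4_bounds (s : ℝ) (hs : 0 ≤ s) :
    ∃ c C : ℝ, 0 < c ∧ 0 < C ∧ ∀ N : ℕ, 1 ≤ N →
      c * (N : ℝ) ^ (2 * s) ≤ HsSq4 s N ∧ HsSq4 s N ≤ C * (N : ℝ) ^ (2 * s) := by
  refine ⟨(2*π)^4 * ((1/4) * (1/4)^s), (2*π)^4 * (9 * 5^s), by positivity, by positivity,
    fun N hN => ?_⟩
  rw [HsSq4_eq]
  have hcard1 : (Finset.Icc (-(N:ℤ)) (N:ℤ)).card = 2*N+1 := by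
    rw [Int.card_Icc]; omega
  set m : ℕ := N / 2 with hm_def
  have hmN : m ≤ N := Nat.div_le_self _ _
  have hN2m : N ≤ 2*m + 1 := by omega
  clear_value m
  set n : ℝ := (N:ℝ) with hn_def
  have hn : 1 ≤ n := by rw [hn_def]; exact_mod_cast hN
  have hNm : n ≤ 2*(m:ℝ) + 1 := by rw [hn_def]; exact_mod_cast hN2m
  clear_value n
  have hn0 : 0 < n := by linarith
  have hinv : n * n⁻¹ = 1 := mul_inv_cancel₀ (ne_of_gt hn0)
  have hinvle : n⁻¹ ≤ 1 := by
    rw [inv_le_one_iff₀]; right; exact hn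
  have hinv0 : 0 ≤ n⁻¹ := by positivity
  set A := Finset.Icc (-(N:ℤ)) (N:ℤ) ×ˢ Finset.Icc (-(N:ℤ)) (N:ℤ) with hA
  have hcardA : A.card = (2*N+1) * (2*N+1) := by
    rw [hA, Finset.card_product, hcard1]
  have hmemA : ∀ k ∈ A, -n ≤ (k.1:ℝ) ∧ (k.1:ℝ) ≤ n ∧ -n ≤ (k.2:ℝ) ∧ (k.2:ℝ) ≤ n := by
    intro k hk
    simp only [hA, Finset.mem_product, Finset.mem_Icc] at hk
    rw [hn_def]
    refine ⟨?_, ?_, ?_, ?_⟩ <;> exact_mod_cast (by tauto : _)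
  clear_value A
  constructor
  · -- lower bound
    set T := Finset.Icc ((m:ℤ)) (N:ℤ) ×ˢ Finset.Icc ((m:ℤ)) (N:ℤ) with hT
    have hsub : T ⊆ A := by
      rw [hA, hT]
      apply Finset.product_subset_product <;> apply Finset.Icc_subset_Icc <;> omega
    have hcardT : (Finset.Icc ((m:ℤ)) (N:ℤ)).card = N - m + 1 := by
      rw [Int.card_Icc]; omega
    have hcT : (((Finset.Icc ((m:ℤ)) (N:ℤ)).card : ℝ)) ≥ n / 2 := by
      rw [hcardT]
      have h' : (N:ℝ) ≤ 2 * ((N - m + 1 : ℕ):ℝ) := by exact_mod_cast (by omega : N ≤ 2*(N-m+1))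
      rw [hn_def]; linarith
    have hmemT : ∀ k ∈ T, (m:ℝ) ≤ (k.1:ℝ) ∧ (m:ℝ) ≤ (k.2:ℝ) := by
      intro k hk
      simp only [hT, Finset.mem_product, Finset.mem_Icc] at hk
      exact ⟨by exact_mod_cast hk.1.1, by exact_mod_cast hk.2.1⟩
    have hterm : ∀ k ∈ T, (n^2/4) ^ s * (n⁻¹)^2 ≤
        (1 + 2*(k.1:ℝ)^2 + 2*(k.2:ℝ)^2) ^ s * (n⁻¹)^2 := by
      intro k hk
      obtain ⟨h1, h2⟩ := hmemT k hk
      have hm0 : (0:ℝ) ≤ (m:ℝ) := by positivity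
      have hk1 : (m:ℝ)^2 ≤ (k.1:ℝ)^2 := by nlinarith
      have hk2 : (m:ℝ)^2 ≤ (k.2:ℝ)^2 := by nlinarith
      have hbase : n^2/4 ≤ 1 + 2*(k.1:ℝ)^2 + 2*(k.2:ℝ)^2 := by
        nlinarith [sq_nonneg (2*(m:ℝ) - 1)]
      exact mul_le_mul_of_nonneg_right (Real.rpow_le_rpow (by positivity) hbase hs)
        (by positivity)
    clear_value T
    have hsum1 : T.card • ((n^2/4) ^ s * (n⁻¹)^2) ≤
        ∑ k ∈ T, (1 + 2*(k.1:ℝ)^2 + 2*(k.2:ℝ)^2) ^ s * (n⁻¹)^2 :=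
      Finset.card_nsmul_le_sum T _ _ hterm
    have hsum2 : ∑ k ∈ T, (1 + 2*(k.1:ℝ)^2 + 2*(k.2:ℝ)^2) ^ s * (n⁻¹)^2 ≤
        ∑ k ∈ A, (1 + 2*(k.1:ℝ)^2 + 2*(k.2:ℝ)^2) ^ s * (n⁻¹)^2 := by
      apply Finset.sum_le_sum_of_subset_of_nonneg hsub
      intro k _ _
      positivity
    have hcardT2 : ((T.card : ℝ)) ≥ n^2/4 := by
      rw [hT, Finset.card_product]
      push_cast
      have h0 : (0:ℝ) ≤ n / 2 := by positivity
      calc n^2/4 = (n/2) * (n/2) := by ring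
        _ ≤ ((Finset.Icc ((m:ℤ)) (N:ℤ)).card : ℝ) * ((Finset.Icc ((m:ℤ)) (N:ℤ)).card : ℝ) :=
            mul_le_mul hcT hcT h0 (by positivity)
    have hrw : (n^2/4) ^ s = n ^ (2*s) * (1/4)^s := by
      rw [rpow_twice n (le_of_lt hn0), ← Real.mul_rpow (by positivity) (by norm_num)]
      ring_nf
    have hkey : (1/4) * n^(2*s) * (1/4)^s ≤ (T.card : ℝ) * ((n^2/4) ^ s * (n⁻¹)^2) := by
      rw [hrw]
      have hns : (0:ℝ) ≤ n^(2*s) := Real.rpow_nonneg (le_of_lt hn0) _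
      have h4s : (0:ℝ) ≤ (1/4:ℝ)^s := Real.rpow_nonneg (by norm_num) _
      have hq : (1/4 : ℝ) ≤ (T.card : ℝ) * (n⁻¹)^2 := by
        have h2 : (n^2/4) * (n⁻¹)^2 = 1/4 := by
          field_simp
        calc (1/4 : ℝ) = (n^2/4) * (n⁻¹)^2 := h2.symm
          _ ≤ (T.card : ℝ) * (n⁻¹)^2 := mul_le_mul_of_nonneg_right hcardT2 (sq_nonneg _)
      calc (1/4) * n^(2*s) * (1/4)^s = (1/4) * (n^(2*s) * (1/4)^s) := by ring
        _ ≤ ((T.card : ℝ) * (n⁻¹)^2) * (n^(2*s) * (1/4)^s) :=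
            mul_le_mul_of_nonneg_right hq (mul_nonneg hns h4s)
        _ = (T.card : ℝ) * ((n ^ (2*s) * (1/4)^s) * (n⁻¹)^2) := by ring
    calc (2*π)^4 * ((1/4) * (1/4)^s) * n^(2*s)
        = (2*π)^4 * ((1/4) * n^(2*s) * (1/4)^s) := by ring
      _ ≤ (2*π)^4 * ∑ k ∈ A, (1 + 2*(k.1:ℝ)^2 + 2*(k.2:ℝ)^2) ^ s * (n⁻¹)^2 := by
          have hfin := le_trans hkey (le_trans (by simpa [nsmul_eq_mul] using hsum1) hsum2)
          gcongr
  · -- upper bound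
    have hterm : ∀ k ∈ A, (1 + 2*(k.1:ℝ)^2 + 2*(k.2:ℝ)^2) ^ s * (n⁻¹)^2 ≤
        (5*n^2) ^ s * (n⁻¹)^2 := by
      intro k hk
      obtain ⟨h1a, h1b, h2a, h2b⟩ := hmemA k hk
      have hbase : 1 + 2*(k.1:ℝ)^2 + 2*(k.2:ℝ)^2 ≤ 5*n^2 := by
        have e1 : (k.1:ℝ)^2 ≤ n^2 := sq_le_sq' h1a h1b
        have e2 : (k.2:ℝ)^2 ≤ n^2 := sq_le_sq' h2a h2b
        nlinarith
      exact mul_le_mul_of_nonneg_right (Real.rpow_le_rpow (by positivity) hbase hs)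
        (by positivity)
    have hsum : ∑ k ∈ A, (1 + 2*(k.1:ℝ)^2 + 2*(k.2:ℝ)^2) ^ s * (n⁻¹)^2 ≤
        A.card • ((5*n^2) ^ s * (n⁻¹)^2) := Finset.sum_le_card_nsmul A _ _ hterm
    have hrw : (5*n^2) ^ s = 5^s * n^(2*s) := by
      rw [Real.mul_rpow (by norm_num) (sq_nonneg n), rpow_twice n (le_of_lt hn0)]
    have hkey : (A.card : ℝ) * ((5*n^2) ^ s * (n⁻¹)^2) ≤ 9 * 5^s * n^(2*s) := by
      rw [hrw, hcardA]
      have hcast : (((2*N+1) * (2*N+1) : ℕ) : ℝ) = (2*n+1) * (2*n+1) := by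
        rw [hn_def]; push_cast; ring
      rw [hcast]
      have h5s : (0:ℝ) ≤ (5:ℝ)^s := Real.rpow_nonneg (by norm_num) _
      have hns : (0:ℝ) ≤ n^(2*s) := Real.rpow_nonneg (le_of_lt hn0) _
      have h3 : (2*n+1) * n⁻¹ ≤ 3 := by
        calc (2*n+1) * n⁻¹ ≤ (3*n) * n⁻¹ := by
              apply mul_le_mul_of_nonneg_right _ hinv0; linarith
          _ = 3 * (n * n⁻¹) := by ring
          _ = 3 := by rw [hinv]; ring
      have hkey2 : (2*n+1) * (2*n+1) * (n⁻¹)^2 ≤ 9 := by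
        calc (2*n+1) * (2*n+1) * (n⁻¹)^2 = ((2*n+1) * n⁻¹) * ((2*n+1) * n⁻¹) := by ring
          _ ≤ 3 * 3 := mul_le_mul h3 h3 (by positivity) (by norm_num)
          _ = 9 := by norm_num
      calc (2*n+1) * (2*n+1) * (5^s * n^(2*s) * (n⁻¹)^2)
          = ((2*n+1) * (2*n+1) * (n⁻¹)^2) * (5^s * n^(2*s)) := by ring
        _ ≤ 9 * (5^s * n^(2*s)) := by
            apply mul_le_mul_of_nonneg_right hkey2; positivity
        _ = 9 * 5^s * n^(2*s) := by ring
    calc (2*π)^4 * ∑ k ∈ A, (1 + 2*(k.1:ℝ)^2 + 2*(k.2:ℝ)^2) ^ s * (n⁻¹)^2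
        ≤ (2*π)^4 * (9 * 5^s * n^(2*s)) := by
          have hfin := le_trans hsum (by simpa [nsmul_eq_mul] using hkey)
          gcongr
      _ = (2*π)^4 * (9 * 5^s) * n^(2*s) := by ring

/-- `‖φ_N‖_{H^s(𝕋⁴)} ∼ N^s` for `s ≥ 0` (constants independent of `N`), and
`φ_N` is invariant under the flow `e^{it(∂²_{x₁}-∂²_{x₂}+∂²_{x₃}-∂²_{x₄})}`, which acts on
the mode `(k₁,-k₁,k₂,-k₂)` by `e^{-it(k₁²-k₁²+k₂²-k₂²)} = 1`. -/
theorem phiN4_Hs_norm_and_invariance (s : ℝ) (hs : 0 ≤ s) :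
    (∃ c C : ℝ, 0 < c ∧ 0 < C ∧ ∀ N : ℕ, 1 ≤ N →
      c * (N : ℝ) ^ (2 * s) ≤ HsSq4 s N ∧ HsSq4 s N ≤ C * (N : ℝ) ^ (2 * s)) ∧
    (∀ (N : ℕ) (t : ℝ) (x : Fin 4 → ℝ),
      ((N : ℝ)⁻¹ : ℝ) * ∑ k ∈ Finset.Icc (-(N : ℤ)) (N : ℤ) ×ˢ Finset.Icc (-(N : ℤ)) (N : ℤ),
          Complex.exp (Complex.I *
            (((k.1 : ℝ) * x 0 - (k.1 : ℝ) * x 1 + (k.2 : ℝ) * x 2 - (k.2 : ℝ) * x 3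
              - t * ((k.1 : ℝ) ^ 2 - (k.1 : ℝ) ^ 2 + (k.2 : ℝ) ^ 2 - (k.2 : ℝ) ^ 2) : ℝ) : ℂ))
        = ((N : ℝ)⁻¹ : ℝ) * ∑ k ∈ Finset.Icc (-(N : ℤ)) (N : ℤ) ×ˢ Finset.Icc (-(N : ℤ)) (N : ℤ),
          Complex.exp (Complex.I *
            (((k.1 : ℝ) * x 0 - (k.1 : ℝ) * x 1 + (k.2 : ℝ) * x 2 - (k.2 : ℝ) * x 3 : ℝ) : ℂ))) := by
  refine ⟨phiN4_bounds s hs, fun N t x => ?_⟩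
  refine congrArg _ (Finset.sum_congr rfl fun k _ => ?_)
  congr 2
  ring
end
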